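/- (Weighted weak law of large numbers for triangular arrays with 1 + η moments; step in the proof of Theorem 3.) Let η ∈ (0, 1], K > 0 and A > 0. For each n, let ξ_{n,1}, …, ξ_{n,n} be independent real random variables with E[ξ_{n,i}] = 0 and E[|ξ_{n,i}|^{1+η}] ≤ K for all i ≤ n, and let a_{n,1}, …, a_{n,n} be nonnegative real numbers with Σ_{i=1}^n a_{n,i} ≤ A and max_{1≤i≤n} a_{n,i} → 0 as n → ∞. Then Σ_{i=1}^n a_{n,i}·ξ_{n,i} → 0 in probability. -/

import Mathlib

open MeasureTheory ProbabilityTheory Filter Topology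

noncomputable def wt_trunc (M t : ℝ) : ℝ := if |t| ≤ M then t else 0

lemma wt_trunc_meas (M : ℝ) : Measurable (wt_trunc M) := by
  unfold wt_trunc
  exact Measurable.ite (measurableSet_le measurable_abs measurable_const)
    measurable_id measurable_const

lemma wt_trunc_abs_le {M : ℝ} (hM : 0 ≤ M) (t : ℝ) : |wt_trunc M t| ≤ M := by
  unfold wt_trunc
  split_ifs with h
  · exact h
  · simpa using hM

lemma wt_trunc_sq_le {η M : ℝ} (hη0 : 0 < η) (hη1 : η ≤ 1) (hM : 1 ≤ M) (t : ℝ) :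
    (wt_trunc M t) ^ 2 ≤ M ^ (1 - η) * |t| ^ (1 + η) := by
  have hM0 : (0:ℝ) < M := lt_of_lt_of_le one_pos hM
  unfold wt_trunc
  split_ifs with h
  · rcases eq_or_ne t 0 with rfl | ht
    · simp [Real.zero_rpow (by positivity : (1:ℝ) + η ≠ 0)]
    · have habs : (0:ℝ) < |t| := abs_pos.2 ht
      have h2 : t ^ 2 = |t| ^ ((1 - η) + (1 + η)) := by
        rw [show (1 - η) + (1 + η) = (2:ℝ) by ring, show ((2:ℝ) = ((2:ℕ) : ℝ)) by norm_num,
          Real.rpow_natCast, sq_abs]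
      rw [h2, Real.rpow_add habs]
      have : |t| ^ (1 - η) ≤ M ^ (1 - η) :=
        Real.rpow_le_rpow (abs_nonneg t) h (by linarith)
      exact mul_le_mul_of_nonneg_right this (Real.rpow_nonneg (abs_nonneg t) _)
  · have : (0:ℝ) ≤ M ^ (1 - η) * |t| ^ (1 + η) := by positivity
    simpa using this

lemma wt_trunc_tail_le {η M : ℝ} (hη0 : 0 < η) (hM : 1 ≤ M) (t : ℝ) :
    |t - wt_trunc M t| ≤ |t| ^ (1 + η) / M ^ η := by
  have hM0 : (0:ℝ) < M := lt_of_lt_of_le one_pos hM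
  have hMη : (0:ℝ) < M ^ η := Real.rpow_pos_of_pos hM0 η
  unfold wt_trunc
  split_ifs with h
  · simp only [sub_self, abs_zero]
    positivity
  · push_neg at h
    have habs : (0:ℝ) < |t| := lt_trans hM0 h
    simp only [sub_zero]
    rw [le_div_iff₀ hMη]
    have h1 : |t| ^ (1 + η) = |t| * |t| ^ η := by
      rw [Real.rpow_add habs, Real.rpow_one]
    rw [h1]
    have : M ^ η ≤ |t| ^ η := Real.rpow_le_rpow hM0.le h.le hη0.le
    exact mul_le_mul_of_nonneg_left this (abs_nonneg t)

lemma wt_variance_sub_const {Ω : Type*} [MeasurableSpace Ω] (P : Measure Ω)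
    [IsProbabilityMeasure P] {X : Ω → ℝ} (hX : MemLp X 2 P) (c : ℝ) :
    variance (fun ω => X ω - c) P = variance X P := by
  have h1 : MemLp (fun ω => X ω - c) 2 P := hX.sub (memLp_const c)
  have hXi : Integrable X P := hX.integrable one_le_two
  have hm : (∫ ω, (X ω - c) ∂P) = (∫ ω, X ω ∂P) - c := by
    rw [integral_sub hXi (integrable_const c), integral_const]
    simp
  rw [variance_eq_integral h1.aemeasurable, variance_eq_integral hX.aemeasurable]
  congr 1
  funext ω
  simp only [Pi.sub_apply, Pi.pow_apply, hm]
  ring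

lemma wt_key {Ω : Type*} [MeasurableSpace Ω] (P : Measure Ω) [IsProbabilityMeasure P]
    (η K A M ε c : ℝ) (hη0 : 0 < η) (hη1 : η ≤ 1) (hK : 0 < K) (hA : 0 < A)
    (hM : 1 ≤ M) (hε : 0 < ε) (hc : 0 < c)
    (n : ℕ) (ξ : ℕ → Ω → ℝ) (hmeas : ∀ i, Measurable (ξ i))
    (hindep : iIndepFun (fun i : Fin n => ξ i) P)
    (hint : ∀ i ∈ Finset.range n, Integrable (ξ i) P)
    (hmean : ∀ i ∈ Finset.range n, (∫ ω, ξ i ω ∂P) = 0)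
    (hmomint : ∀ i ∈ Finset.range n, Integrable (fun ω => |ξ i ω| ^ (1 + η)) P)
    (hmom : ∀ i ∈ Finset.range n, (∫ ω, |ξ i ω| ^ (1 + η) ∂P) ≤ K)
    (a : ℕ → ℝ) (ha_nonneg : ∀ i ∈ Finset.range n, 0 ≤ a i)
    (ha_sum : (∑ i ∈ Finset.range n, a i) ≤ A)
    (ha_lt : ∀ i ∈ Finset.range n, a i < c) :
    P {ω | ε ≤ |∑ i ∈ Finset.range n, a i * ξ i ω|} ≤
      ENNReal.ofReal (c * A * (M ^ (1-η) * K) / (ε/2)^2) +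
      ENNReal.ofReal ((A * (2 * (K / M ^ η))) / (ε/2)) := by
  have hM0 : (0:ℝ) < M := lt_of_lt_of_le one_pos hM
  -- truncated variables
  set Y : ℕ → Ω → ℝ := fun i ω => wt_trunc M (ξ i ω) with hYdef
  set m : ℕ → ℝ := fun i => ∫ ω, Y i ω ∂P with hmdef
  set W : ℕ → Ω → ℝ := fun i ω => a i * (Y i ω - m i) with hWdef
  set Z : ℕ → Ω → ℝ := fun i ω => ξ i ω - Y i ω with hZdef
  set mz : ℕ → ℝ := fun i => ∫ ω, Z i ω ∂P with hmzdef
  have hYmeas : ∀ i, Measurable (Y i) := fun i => (wt_trunc_meas M).comp (hmeas i)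
  have hYm2 : ∀ i, MemLp (Y i) 2 P := fun i =>
    MemLp.of_bound (hYmeas i).aestronglyMeasurable M
      (ae_of_all _ fun ω => by
        simpa [Real.norm_eq_abs] using wt_trunc_abs_le hM0.le (ξ i ω))
  have hYint : ∀ i, Integrable (Y i) P := fun i => (hYm2 i).integrable one_le_two
  have hWm2 : ∀ i, MemLp (W i) 2 P := fun i =>
    ((hYm2 i).sub (memLp_const (m i))).const_mul (a i)
  have hWint : ∀ i, Integrable (W i) P := fun i => (hWm2 i).integrable one_le_two
  have hWmean : ∀ i, (∫ ω, W i ω ∂P) = 0 := by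
    intro i
    have : (∫ ω, W i ω ∂P) = a i * ∫ ω, (Y i ω - m i) ∂P := integral_const_mul _ _
    rw [this, integral_sub (hYint i) (integrable_const _), integral_const]
    simp [hmdef]
  -- variance bound for each W i
  have hVarW : ∀ i ∈ Finset.range n, variance (W i) P ≤ c * a i * (M ^ (1-η) * K) := by
    intro i hi
    have h1 : variance (W i) P = (a i)^2 * variance (fun ω => Y i ω - m i) P :=
      variance_const_mul (a i) _ P
    rw [h1, wt_variance_sub_const P (hYm2 i)]
    have h2 : variance (Y i) P ≤ ∫ ω, (Y i ω)^2 ∂P := by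
      simpa using variance_le_expectation_sq (μ := P) (hYmeas i).aestronglyMeasurable
    have h3 : (∫ ω, (Y i ω)^2 ∂P) ≤ M ^ (1-η) * K := by
      have step : (∫ ω, (Y i ω)^2 ∂P) ≤ ∫ ω, M ^ (1-η) * |ξ i ω| ^ (1+η) ∂P := by
        refine integral_mono ?_ ((hmomint i hi).const_mul _) ?_
        · simpa using (hYm2 i).integrable_sq
        · exact fun ω => wt_trunc_sq_le hη0 hη1 hM (ξ i ω)
      rw [integral_const_mul] at step
      calc (∫ ω, (Y i ω)^2 ∂P) ≤ M ^ (1-η) * ∫ ω, |ξ i ω| ^ (1+η) ∂P := step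
        _ ≤ M ^ (1-η) * K := by
            exact mul_le_mul_of_nonneg_left (hmom i hi) (Real.rpow_nonneg hM0.le _)
    have ha := ha_nonneg i hi
    have hac := ha_lt i hi
    have hB : (0:ℝ) ≤ M ^ (1-η) * K := by positivity
    calc (a i)^2 * variance (Y i) P ≤ (a i)^2 * (M ^ (1-η) * K) :=
          mul_le_mul_of_nonneg_left (h2.trans h3) (sq_nonneg _)
      _ ≤ c * a i * (M ^ (1-η) * K) := by
          have hsq : (a i)^2 ≤ c * a i := by nlinarith
          exact mul_le_mul_of_nonneg_right hsq hB
  -- T1 : sum of truncated centered parts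
  set T1 : Ω → ℝ := ∑ i ∈ Finset.range n, W i with hT1def
  have hT1m2 : MemLp T1 2 P := memLp_finset_sum' _ (fun i _ => hWm2 i)
  have hT1mean : (∫ ω, T1 ω ∂P) = 0 := by
    have : (∫ ω, T1 ω ∂P) = ∑ i ∈ Finset.range n, ∫ ω, W i ω ∂P := by
      rw [hT1def]
      simpa using integral_finset_sum (Finset.range n) (fun i _ => hWint i)
    rw [this]
    exact Finset.sum_eq_zero fun i _ => hWmean i
  -- pairwise independence of the W i
  have hWpair : Set.Pairwise ↑(Finset.range n) fun i j => IndepFun (W i) (W j) P := by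
    intro i hi j hj hij
    simp only [Finset.coe_range, Set.mem_Iio] at hi hj
    have hcomp := hindep.comp
      (fun (k : Fin n) (t : ℝ) => a k * (wt_trunc M t - m k))
      (fun k => ((wt_trunc_meas M).sub measurable_const).const_mul _)
    have hne : (⟨i, hi⟩ : Fin n) ≠ ⟨j, hj⟩ := by
      simp only [ne_eq, Fin.mk.injEq]
      exact hij
    have := hcomp.indepFun hne
    exact this
  have hVarT1 : variance T1 P ≤ c * A * (M ^ (1-η) * K) := by
    rw [hT1def, IndepFun.variance_sum (fun i _ => hWm2 i) hWpair]
    calc ∑ i ∈ Finset.range n, variance (W i) P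
        ≤ ∑ i ∈ Finset.range n, c * a i * (M ^ (1-η) * K) := Finset.sum_le_sum hVarW
      _ = c * (∑ i ∈ Finset.range n, a i) * (M ^ (1-η) * K) := by
          rw [← Finset.sum_mul, ← Finset.mul_sum]
      _ ≤ c * A * (M ^ (1-η) * K) := by
          have : (0:ℝ) ≤ M ^ (1-η) * K := by positivity
          have h2 : c * (∑ i ∈ Finset.range n, a i) ≤ c * A :=
            mul_le_mul_of_nonneg_left ha_sum hc.le
          exact mul_le_mul_of_nonneg_right h2 this
  have hcheb : P {ω | ε/2 ≤ |T1 ω|} ≤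
      ENNReal.ofReal (c * A * (M ^ (1-η) * K) / (ε/2)^2) := by
    have h := meas_ge_le_variance_div_sq (μ := P) hT1m2 (show (0:ℝ) < ε/2 by linarith)
    rw [hT1mean] at h
    simp only [sub_zero] at h
    refine h.trans (ENNReal.ofReal_le_ofReal ?_)
    exact div_le_div_of_nonneg_right hVarT1 (by positivity)
  -- T2 : tail parts
  set T2 : Ω → ℝ := fun ω => ∑ i ∈ Finset.range n, a i * (Z i ω - mz i) with hT2def
  have hZint : ∀ i ∈ Finset.range n, Integrable (Z i) P :=
    fun i hi => (hint i hi).sub (hYint i)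
  have hZ1 : ∀ i ∈ Finset.range n, (∫ ω, |Z i ω| ∂P) ≤ K / M ^ η := by
    intro i hi
    have step : (∫ ω, |Z i ω| ∂P) ≤ ∫ ω, |ξ i ω| ^ (1+η) / M ^ η ∂P := by
      refine integral_mono (hZint i hi).abs ((hmomint i hi).div_const _) ?_
      exact fun ω => wt_trunc_tail_le hη0 hM (ξ i ω)
    rw [integral_div] at step
    refine step.trans ?_
    exact div_le_div_of_nonneg_right (hmom i hi) (Real.rpow_pos_of_pos hM0 η).le
  have hZcint : ∀ i ∈ Finset.range n, Integrable (fun ω => Z i ω - mz i) P :=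
    fun i hi => (hZint i hi).sub (integrable_const _)
  have hZc : ∀ i ∈ Finset.range n, (∫ ω, |Z i ω - mz i| ∂P) ≤ 2 * (K / M ^ η) := by
    intro i hi
    have habs : |mz i| ≤ ∫ ω, |Z i ω| ∂P := by
      simpa [Real.norm_eq_abs, hmzdef] using norm_integral_le_integral_norm (μ := P) (Z i)
    calc (∫ ω, |Z i ω - mz i| ∂P) ≤ ∫ ω, (|Z i ω| + |mz i|) ∂P := by
          refine integral_mono (hZcint i hi).abs ((hZint i hi).abs.add (integrable_const _)) ?_
          intro ω
          simpa [Real.norm_eq_abs] using norm_sub_le (Z i ω) (mz i)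
      _ = (∫ ω, |Z i ω| ∂P) + |mz i| := by
          rw [integral_add (hZint i hi).abs (integrable_const _), integral_const]
          simp
      _ ≤ 2 * (K / M ^ η) := by
          have h1 := hZ1 i hi
          have h2 := habs.trans h1
          linarith
  have hT2int : Integrable T2 P := by
    rw [hT2def]
    exact integrable_finset_sum _ (fun i hi => ((hZcint i hi).const_mul _))
  have hT2abs : (∫ ω, |T2 ω| ∂P) ≤ A * (2 * (K / M ^ η)) := by
    have step : (∫ ω, |T2 ω| ∂P) ≤ ∫ ω, ∑ i ∈ Finset.range n, a i * |Z i ω - mz i| ∂P := by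
      refine integral_mono hT2int.abs
        (integrable_finset_sum _ (fun i hi => (hZcint i hi).abs.const_mul _)) ?_
      intro ω
      calc |T2 ω| ≤ ∑ i ∈ Finset.range n, |a i * (Z i ω - mz i)| :=
            Finset.abs_sum_le_sum_abs _ _
        _ = ∑ i ∈ Finset.range n, a i * |Z i ω - mz i| := by
            refine Finset.sum_congr rfl fun i hi => ?_
            rw [abs_mul, abs_of_nonneg (ha_nonneg i hi)]
    rw [integral_finset_sum _ (fun i hi => (hZcint i hi).abs.const_mul _)] at step
    simp_rw [integral_const_mul] at step
    refine step.trans ?_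
    calc ∑ i ∈ Finset.range n, (a i * ∫ ω, |Z i ω - mz i| ∂P)
        ≤ ∑ i ∈ Finset.range n, a i * (2 * (K / M ^ η)) := by
          refine Finset.sum_le_sum fun i hi => ?_
          exact mul_le_mul_of_nonneg_left (hZc i hi) (ha_nonneg i hi)
      _ = (∑ i ∈ Finset.range n, a i) * (2 * (K / M ^ η)) := by rw [Finset.sum_mul]
      _ ≤ A * (2 * (K / M ^ η)) := by
          have : (0:ℝ) ≤ 2 * (K / M ^ η) := by positivity
          exact mul_le_mul_of_nonneg_right ha_sum this
  have hmarkov : P {ω | ε/2 ≤ |T2 ω|} ≤ ENNReal.ofReal ((A * (2 * (K / M ^ η))) / (ε/2)) := by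
    have h := mul_meas_ge_le_integral_of_nonneg
      (ae_of_all P (fun ω => abs_nonneg (T2 ω))) hT2int.abs (ε/2)
    have h2 : (P {ω | ε/2 ≤ |T2 ω|}).toReal ≤ (A * (2 * (K / M ^ η))) / (ε/2) := by
      rw [le_div_iff₀ (by linarith : (0:ℝ) < ε/2)]
      calc (P {ω | ε/2 ≤ |T2 ω|}).toReal * (ε/2)
          = (ε/2) * (P {ω | ε/2 ≤ |T2 ω|}).toReal := mul_comm _ _
        _ ≤ ∫ ω, |T2 ω| ∂P := h
        _ ≤ A * (2 * (K / M ^ η)) := hT2abs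
    calc P {ω | ε/2 ≤ |T2 ω|} = ENNReal.ofReal (P {ω | ε/2 ≤ |T2 ω|}).toReal :=
          (ENNReal.ofReal_toReal (measure_ne_top P _)).symm
      _ ≤ _ := ENNReal.ofReal_le_ofReal h2
  -- decomposition
  have hm0 : ∀ i ∈ Finset.range n, m i + mz i = 0 := by
    intro i hi
    have : mz i = (∫ ω, ξ i ω ∂P) - ∫ ω, Y i ω ∂P := by
      rw [hmzdef]
      exact integral_sub (hint i hi) (hYint i)
    rw [this, hmean i hi, hmdef]
    ring
  have hdecomp : ∀ ω, (∑ i ∈ Finset.range n, a i * ξ i ω) = T1 ω + T2 ω := by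
    intro ω
    have hT1ω : T1 ω = ∑ i ∈ Finset.range n, W i ω := by
      rw [hT1def]; simp
    rw [hT1ω, hT2def, ← Finset.sum_add_distrib]
    refine Finset.sum_congr rfl fun i hi => ?_
    have h := hm0 i hi
    show a i * ξ i ω = a i * (Y i ω - m i) + a i * ((ξ i ω - Y i ω) - mz i)
    linear_combination (a i) * h
  -- union bound
  have hsub : {ω | ε ≤ |∑ i ∈ Finset.range n, a i * ξ i ω|} ⊆
      {ω | ε/2 ≤ |T1 ω|} ∪ {ω | ε/2 ≤ |T2 ω|} := by
    intro ω hω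
    simp only [Set.mem_setOf_eq] at hω
    rw [hdecomp ω] at hω
    by_contra h
    simp only [Set.mem_union, Set.mem_setOf_eq, not_or, not_le] at h
    have := abs_add_le (T1 ω) (T2 ω)
    obtain ⟨h1, h2⟩ := h
    linarith
  calc P {ω | ε ≤ |∑ i ∈ Finset.range n, a i * ξ i ω|}
      ≤ P ({ω | ε/2 ≤ |T1 ω|} ∪ {ω | ε/2 ≤ |T2 ω|}) := measure_mono hsub
    _ ≤ P {ω | ε/2 ≤ |T1 ω|} + P {ω | ε/2 ≤ |T2 ω|} := measure_union_le _ _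
    _ ≤ _ := add_le_add hcheb hmarkov

/-- weighted weak law of large numbers for triangular arrays with `1+η`
moments. If for each `n` the `ξ_{n,i}`, `i < n`, are independent, centered, with
`E|ξ_{n,i}|^{1+η} ≤ K`, and the nonnegative weights satisfy `Σ a_{n,i} ≤ A` and
`max_i a_{n,i} → 0`, then `Σ a_{n,i}·ξ_{n,i} →ₚ 0`. -/
theorem weighted_triangular_wlln
    {Ω : Type*} [MeasurableSpace Ω] (P : Measure Ω) [IsProbabilityMeasure P]
    (η K A : ℝ) (hη0 : 0 < η) (hη1 : η ≤ 1) (hK : 0 < K) (hA : 0 < A)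
    (ξ : ℕ → ℕ → Ω → ℝ)
    (hmeas : ∀ n i, Measurable (ξ n i))
    (hindep : ∀ n : ℕ, iIndepFun (fun i : Fin n => ξ n i) P)
    (hint : ∀ n, ∀ i ∈ Finset.range n, Integrable (ξ n i) P)
    (hmean : ∀ n, ∀ i ∈ Finset.range n, (∫ ω, ξ n i ω ∂P) = 0)
    (hmomint : ∀ n, ∀ i ∈ Finset.range n, Integrable (fun ω => |ξ n i ω| ^ (1 + η)) P)
    (hmom : ∀ n, ∀ i ∈ Finset.range n, (∫ ω, |ξ n i ω| ^ (1 + η) ∂P) ≤ K)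
    (a : ℕ → ℕ → ℝ)
    (ha_nonneg : ∀ n, ∀ i ∈ Finset.range n, 0 ≤ a n i)
    (ha_sum : ∀ n : ℕ, (∑ i ∈ Finset.range n, a n i) ≤ A)
    (ha_max : ∀ ε : ℝ, 0 < ε → ∀ᶠ n in atTop, ∀ i ∈ Finset.range n, a n i < ε) :
    TendstoInMeasure P
      (fun (n : ℕ) ω => ∑ i ∈ Finset.range n, a n i * ξ n i ω)
      atTop (fun _ => 0) := by
  rw [tendstoInMeasure_iff_dist]
  intro ε hε
  rw [ENNReal.tendsto_atTop_zero]
  intro δ hδ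
  set d : ℝ := (min δ 1).toReal with hd
  have hδtop : (min δ 1) ≠ ⊤ := by
    exact ne_top_of_le_ne_top (by norm_num) (min_le_right _ _)
  have hδ0 : (min δ 1) ≠ 0 := by
    have : (0:ENNReal) < min δ 1 := lt_min hδ (by norm_num)
    exact this.ne'
  have hdpos : 0 < d := ENNReal.toReal_pos hδ0 hδtop
  set M : ℝ := max 1 ((8*A*K/(ε*d)) ^ (1/η : ℝ)) with hMdef
  have hM1 : (1:ℝ) ≤ M := le_max_left _ _
  have hM0 : (0:ℝ) < M := lt_of_lt_of_le one_pos hM1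
  have hMη : 8*A*K/(ε*d) ≤ M ^ η := by
    have hx : (0:ℝ) ≤ 8*A*K/(ε*d) := by positivity
    calc 8*A*K/(ε*d) = ((8*A*K/(ε*d)) ^ (1/η : ℝ)) ^ η := by
          rw [← Real.rpow_mul hx, one_div, inv_mul_cancel₀ hη0.ne', Real.rpow_one]
      _ ≤ M ^ η := Real.rpow_le_rpow (Real.rpow_nonneg hx _) (le_max_right _ _) hη0.le
  have hMp : (0:ℝ) < M ^ η := Real.rpow_pos_of_pos hM0 η
  have htail : A * (2*(K/M^η)) / (ε/2) ≤ d/2 := by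
    have hkey : 8*A*K ≤ ε*d*(M^η) := by
      rw [div_le_iff₀ (by positivity : (0:ℝ) < ε*d)] at hMη
      linarith
    have e1 : A * (2*(K/M^η)) / (ε/2) = 4*A*K/(ε*(M^η)) := by
      field_simp
      ring
    rw [e1, div_le_div_iff₀ (by positivity) (by norm_num : (0:ℝ) < 2)]
    nlinarith
  set B : ℝ := M ^ (1-η) * K with hBdef
  have hBpos : (0:ℝ) < B := by positivity
  set c : ℝ := (d/2) * (ε/2)^2 / (A*B) with hcdef
  have hcpos : 0 < c := by positivity
  have hvarterm : c * A * B / (ε/2)^2 = d/2 := by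
    have hMne : M ^ (1-η) ≠ 0 := (Real.rpow_pos_of_pos hM0 _).ne'
    rw [hcdef, hBdef]
    field_simp
  have hev : ∀ᶠ n in atTop,
      P {x | ε ≤ dist ((fun ω => ∑ i ∈ Finset.range n, a n i * ξ n i ω) x) ((fun _ => (0:ℝ)) x)}
        ≤ δ := by
    filter_upwards [ha_max c hcpos] with n hn
    have key := wt_key P η K A M ε c hη0 hη1 hK hA hM1 hε hcpos n (ξ n) (hmeas n)
      (hindep n) (hint n) (hmean n) (hmomint n) (hmom n) (a n) (ha_nonneg n) (ha_sum n) hn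
    have hset : {x | ε ≤ dist ((fun ω => ∑ i ∈ Finset.range n, a n i * ξ n i ω) x)
        ((fun _ => (0:ℝ)) x)} = {ω | ε ≤ |∑ i ∈ Finset.range n, a n i * ξ n i ω|} := by
      ext ω
      simp [Real.dist_eq]
    rw [hset]
    calc P {ω | ε ≤ |∑ i ∈ Finset.range n, a n i * ξ n i ω|}
        ≤ ENNReal.ofReal (c * A * (M ^ (1-η) * K) / (ε/2)^2) +
          ENNReal.ofReal ((A * (2 * (K / M ^ η))) / (ε/2)) := key
      _ ≤ ENNReal.ofReal (d/2) + ENNReal.ofReal (d/2) := by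
          refine add_le_add (ENNReal.ofReal_le_ofReal ?_) (ENNReal.ofReal_le_ofReal htail)
          rw [← hBdef, hvarterm]
      _ = ENNReal.ofReal d := by
          rw [← ENNReal.ofReal_add (by positivity) (by positivity)]
          norm_num
      _ = min δ 1 := ENNReal.ofReal_toReal hδtop
      _ ≤ δ := min_le_left _ _
  exact eventually_atTop.mp hev
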